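/- The ten even theta nullwerte θ₁,…,θ₁₀ of genus 2 satisfy the Riemann relation θ₇⁴ − θ₈⁴ − θ₉⁴ + θ₁₀⁴ = 0 identically on the Siegel upper half-space, where θ₇,…,θ₁₀ correspond to the even characteristics (1,0,0,0), (1,0,0,1), (1,1,0,0), (1,1,1,1) respectively. -/

import Mathlib

open Matrix

/-- The genus-2 Siegel upper half-space. -/
def SiegelH2 : Set (Matrix (Fin 2) (Fin 2) ℂ) :=
  {Z | Z.IsSymm ∧ (Z.map Complex.im).PosDef}

/-- The genus-2 theta nullwert
`θ[m](Z) = Σ_{g∈ℤ²} exp(πi(Z[g+a/2] + ᵗ(g+a/2)b))` for `m = (a,b)`. -/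
noncomputable def thetaNull (a b : Fin 2 → ℤ) (Z : Matrix (Fin 2) (Fin 2) ℂ) : ℂ :=
  ∑' g : Fin 2 → ℤ,
    Complex.exp ((Real.pi : ℂ) * Complex.I *
      ((fun i => (g i : ℂ) + (a i : ℂ) / 2) ⬝ᵥ
          Z *ᵥ (fun i => (g i : ℂ) + (a i : ℂ) / 2) +
        (fun i => (g i : ℂ) + (a i : ℂ) / 2) ⬝ᵥ (fun i => (b i : ℂ))))

set_option maxHeartbeats 1000000

namespace RR
open Complex Real

noncomputable def Qc (Z : Matrix (Fin 2) (Fin 2) ℂ) (x y : ℂ) : ℂ :=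
  x * (Z 0 0 * x + Z 0 1 * y) + y * (Z 1 0 * x + Z 1 1 * y)

noncomputable def f7 (Z : Matrix (Fin 2) (Fin 2) ℂ) (g : ℤ × ℤ) : ℂ :=
  Complex.exp ((Real.pi : ℂ) * I * Qc Z ((g.1 : ℂ) + 1/2) (g.2 : ℂ))
noncomputable def f8 (Z : Matrix (Fin 2) (Fin 2) ℂ) (g : ℤ × ℤ) : ℂ :=
  Complex.exp ((Real.pi : ℂ) * I * (Qc Z ((g.1 : ℂ) + 1/2) (g.2 : ℂ) + (g.2 : ℂ)))
noncomputable def f9 (Z : Matrix (Fin 2) (Fin 2) ℂ) (g : ℤ × ℤ) : ℂ :=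
  Complex.exp ((Real.pi : ℂ) * I * Qc Z ((g.1 : ℂ) + 1/2) ((g.2 : ℂ) + 1/2))
noncomputable def f10 (Z : Matrix (Fin 2) (Fin 2) ℂ) (g : ℤ × ℤ) : ℂ :=
  Complex.exp ((Real.pi : ℂ) * I * (Qc Z ((g.1 : ℂ) + 1/2) ((g.2 : ℂ) + 1/2)
    + ((g.1 : ℂ) + 1/2) + ((g.2 : ℂ) + 1/2)))

variable (Z : Matrix (Fin 2) (Fin 2) ℂ)

lemma theta_eq (a b : Fin 2 → ℤ) :
    thetaNull a b Z = ∑' g : ℤ × ℤ,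
      Complex.exp ((Real.pi : ℂ) * I *
        (Qc Z ((g.1 : ℂ) + (a 0 : ℂ)/2) ((g.2 : ℂ) + (a 1 : ℂ)/2) +
          ((g.1 : ℂ) + (a 0 : ℂ)/2) * (b 0 : ℂ) + ((g.2 : ℂ) + (a 1 : ℂ)/2) * (b 1 : ℂ))) := by
  rw [thetaNull, ← Equiv.tsum_eq (piFinTwoEquiv fun _ => ℤ).symm]
  congr 1
  funext g
  congr 1
  simp only [dotProduct, Matrix.mulVec, Fin.sum_univ_two, piFinTwoEquiv,
    Equiv.coe_fn_symm_mk, Qc, Fin.cons_zero, Fin.cons_one]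
  ring

lemma theta7_eq : thetaNull ![1,0] ![0,0] Z = ∑' g : ℤ × ℤ, f7 Z g := by
  rw [theta_eq]
  congr 1; funext g; simp [f7]
lemma theta8_eq : thetaNull ![1,0] ![0,1] Z = ∑' g : ℤ × ℤ, f8 Z g := by
  rw [theta_eq]
  congr 1; funext g; simp [f8]
lemma theta9_eq : thetaNull ![1,1] ![0,0] Z = ∑' g : ℤ × ℤ, f9 Z g := by
  rw [theta_eq]
  congr 1; funext g; simp [f9]
lemma theta10_eq : thetaNull ![1,1] ![1,1] Z = ∑' g : ℤ × ℤ, f10 Z g := by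
  rw [theta_eq]
  congr 1; funext g; simp [f10]


noncomputable def Qr (Z : Matrix (Fin 2) (Fin 2) ℂ) (x y : ℝ) : ℝ :=
  x * ((Z 0 0).im * x + (Z 0 1).im * y) + y * ((Z 1 0).im * x + (Z 1 1).im * y)

lemma exists_delta (hpos : (Z.map Complex.im).PosDef) :
    ∃ δ > 0, ∀ x y : ℝ, δ * (x^2 + y^2) ≤ Qr Z x y := by
  set Y := Z.map Complex.im with hY
  have hsym : Y 1 0 = Y 0 1 := by
    have := congrFun (congrFun hpos.1.symm 1) 0
    simpa [Matrix.conjTranspose_apply] using this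
  have hdet : 0 < Y 0 0 * Y 1 1 - Y 0 1 * Y 1 0 := by
    have := hpos.det_pos
    rwa [Matrix.det_fin_two] at this
  have h00 : 0 < Y 0 0 := by
    have h := hpos.diag_pos (i := 0)
    simpa [dotProduct, Matrix.mulVec, Fin.sum_univ_two] using h
  have h11 : 0 < Y 1 1 := by
    have h := hpos.diag_pos (i := 1)
    simpa [dotProduct, Matrix.mulVec, Fin.sum_univ_two] using h
  have htr : 0 < Y 0 0 + Y 1 1 := by linarith
  refine ⟨(Y 0 0 * Y 1 1 - Y 0 1 * Y 1 0) / (Y 0 0 + Y 1 1), div_pos hdet htr, fun x y => ?_⟩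
  rw [div_mul_eq_mul_div, div_le_iff₀ htr]
  have hY00 : (Z 0 0).im = Y 0 0 := by simp [hY]
  have hY01 : (Z 0 1).im = Y 0 1 := by simp [hY]
  have hY10 : (Z 1 0).im = Y 1 0 := by simp [hY]
  have hY11 : (Z 1 1).im = Y 1 1 := by simp [hY]
  rw [Qr, hY00, hY01, hY10, hY11, hsym]
  nlinarith [sq_nonneg (Y 0 0 * x + Y 0 1 * y), sq_nonneg (Y 0 1 * x + Y 1 1 * y), sq_nonneg x, sq_nonneg y]

lemma summable_1d {δ : ℝ} (hδ : 0 < δ) (c : ℝ) :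
    Summable (fun n : ℤ => rexp (-π * (δ * ((n:ℝ) + c)^2))) := by
  have hb := summable_pow_mul_jacobiTheta₂_term_bound (δ * |c|) hδ 0
  simp only [pow_zero, one_mul] at hb
  refine Summable.of_nonneg_of_le (fun n => (Real.exp_pos _).le) (fun n => ?_) hb
  rw [Real.exp_le_exp]
  have h1 : -((n:ℝ) * c) ≤ |(n:ℝ)| * |c| := by
    rw [← abs_mul]; linarith [neg_abs_le ((n:ℝ) * c), le_abs_self ((n:ℝ)*c)]
  have h2 : ((|n| : ℤ) : ℝ) = |(n:ℝ)| := by push_cast; ring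
  have key : δ * (n:ℝ)^2 - 2*(δ*|c|)*((|n|:ℤ):ℝ) ≤ δ * ((n:ℝ)+c)^2 := by
    rw [h2]
    nlinarith [mul_le_mul_of_nonneg_left h1 hδ.le, mul_nonneg hδ.le (sq_nonneg c)]
  have := mul_le_mul_of_nonneg_left key pi_pos.le
  linarith


lemma im_Qc (x y : ℝ) : (Qc Z (x:ℂ) (y:ℂ)).im = Qr Z x y := by
  simp [Qc, Qr, Complex.add_im, Complex.mul_im]

lemma re_pi_I_mul (w : ℂ) : ((Real.pi : ℂ) * I * w).re = -(π * w.im) := by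
  simp [Complex.mul_re, Complex.mul_im]


lemma norm_f7 (g : ℤ × ℤ) : ‖f7 Z g‖ = rexp (-(π * Qr Z ((g.1:ℝ)+1/2) (g.2:ℝ))) := by
  rw [f7, Complex.norm_exp, re_pi_I_mul,
    show ((g.1:ℂ)+1/2) = ((((g.1:ℝ)+1/2):ℝ):ℂ) by push_cast; ring,
    show ((g.2:ℂ)) = (((g.2:ℝ):ℝ):ℂ) by push_cast; ring, im_Qc]

lemma norm_f8 (g : ℤ × ℤ) : ‖f8 Z g‖ = rexp (-(π * Qr Z ((g.1:ℝ)+1/2) (g.2:ℝ))) := by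
  rw [f8, Complex.norm_exp, re_pi_I_mul,
    show (Qc Z ((g.1:ℂ)+1/2) (g.2:ℂ) + (g.2:ℂ))
      = Qc Z ((((g.1:ℝ)+1/2):ℝ):ℂ) (((g.2:ℝ):ℝ):ℂ) + (((g.2:ℝ):ℝ):ℂ) by push_cast; ring,
    Complex.add_im, im_Qc, Complex.ofReal_im, add_zero]

lemma norm_f9 (g : ℤ × ℤ) : ‖f9 Z g‖ = rexp (-(π * Qr Z ((g.1:ℝ)+1/2) ((g.2:ℝ)+1/2))) := by
  rw [f9, Complex.norm_exp, re_pi_I_mul,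
    show ((g.1:ℂ)+1/2) = ((((g.1:ℝ)+1/2):ℝ):ℂ) by push_cast; ring,
    show ((g.2:ℂ)+1/2) = ((((g.2:ℝ)+1/2):ℝ):ℂ) by push_cast; ring, im_Qc]

lemma norm_f10 (g : ℤ × ℤ) : ‖f10 Z g‖ = rexp (-(π * Qr Z ((g.1:ℝ)+1/2) ((g.2:ℝ)+1/2))) := by
  rw [f10, Complex.norm_exp, re_pi_I_mul,
    show (Qc Z ((g.1:ℂ)+1/2) ((g.2:ℂ)+1/2) + ((g.1:ℂ)+1/2) + ((g.2:ℂ)+1/2))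
      = Qc Z ((((g.1:ℝ)+1/2):ℝ):ℂ) ((((g.2:ℝ)+1/2):ℝ):ℂ)
        + ((((g.1:ℝ)+1/2):ℝ):ℂ) + ((((g.2:ℝ)+1/2):ℝ):ℂ) by push_cast; ring,
    Complex.add_im, Complex.add_im, im_Qc]
  simp



lemma summable_pt0 {δ : ℝ} (hδ : 0 < δ) :
    Summable (fun n : ℤ => rexp (-π * (δ * ((n:ℝ))^2))) := by
  simpa using summable_1d hδ 0

lemma exp_bound {δ : ℝ} (hb : ∀ x y : ℝ, δ * (x^2 + y^2) ≤ Qr Z x y) (x y : ℝ) :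
    rexp (-(π * Qr Z x y)) ≤ rexp (-π * (δ * x^2)) * rexp (-π * (δ * y^2)) := by
  rw [← Real.exp_add, Real.exp_le_exp]
  have := mul_le_mul_of_nonneg_left (hb x y) pi_pos.le
  nlinarith

lemma summable_norm_f7 (hpos : (Z.map Complex.im).PosDef) :
    Summable fun g : ℤ × ℤ => ‖f7 Z g‖ := by
  obtain ⟨δ, hδ, hb⟩ := exists_delta Z hpos
  refine Summable.of_nonneg_of_le (fun g => norm_nonneg _) (fun g => ?_)
    ((summable_1d hδ (1/2)).mul_of_nonneg (summable_pt0 hδ)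
      (fun n => (Real.exp_pos _).le) (fun n => (Real.exp_pos _).le))
  rw [norm_f7]
  exact exp_bound Z hb _ _

lemma summable_norm_f8 (hpos : (Z.map Complex.im).PosDef) :
    Summable fun g : ℤ × ℤ => ‖f8 Z g‖ :=
  (summable_norm_f7 Z hpos).congr fun g => by rw [norm_f7, norm_f8]

lemma summable_norm_f9 (hpos : (Z.map Complex.im).PosDef) :
    Summable fun g : ℤ × ℤ => ‖f9 Z g‖ := by
  obtain ⟨δ, hδ, hb⟩ := exists_delta Z hpos
  refine Summable.of_nonneg_of_le (fun g => norm_nonneg _) (fun g => ?_)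
    ((summable_1d hδ (1/2)).mul_of_nonneg (summable_1d hδ (1/2))
      (fun n => (Real.exp_pos _).le) (fun n => (Real.exp_pos _).le))
  rw [norm_f9]
  exact exp_bound Z hb _ _

lemma summable_norm_f10 (hpos : (Z.map Complex.im).PosDef) :
    Summable fun g : ℤ × ℤ => ‖f10 Z g‖ :=
  (summable_norm_f9 Z hpos).congr fun g => by rw [norm_f9, norm_f10]

abbrev Idx : Type := (ℤ×ℤ) × (ℤ×ℤ) × (ℤ×ℤ) × (ℤ×ℤ)

lemma pow_four {f : ℤ×ℤ → ℂ} (hf : Summable fun g : ℤ×ℤ => ‖f g‖) :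
    (∑' g : ℤ×ℤ, f g)^4 = ∑' G : (ℤ×ℤ) × (ℤ×ℤ) × (ℤ×ℤ) × (ℤ×ℤ), f G.1 * (f G.2.1 * (f G.2.2.1 * f G.2.2.2)) := by
  have h2 : Summable fun x : (ℤ×ℤ)×(ℤ×ℤ) => ‖f x.1 * f x.2‖ := hf.mul_norm hf
  have h3 : Summable fun x : (ℤ×ℤ)×((ℤ×ℤ)×(ℤ×ℤ)) => ‖f x.1 * (f x.2.1 * f x.2.2)‖ :=
    hf.mul_norm (g := fun x : (ℤ×ℤ)×(ℤ×ℤ) => f x.1 * f x.2) h2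
  have e2 := tsum_mul_tsum_of_summable_norm hf hf
  have e3 := tsum_mul_tsum_of_summable_norm (g := fun x : (ℤ×ℤ)×(ℤ×ℤ) => f x.1 * f x.2) hf h2
  have e4 := tsum_mul_tsum_of_summable_norm
    (g := fun x : (ℤ×ℤ)×((ℤ×ℤ)×(ℤ×ℤ)) => f x.1 * (f x.2.1 * f x.2.2)) hf h3
  calc (∑' g : ℤ×ℤ, f g)^4
      = (∑' g : ℤ×ℤ, f g) * ((∑' g : ℤ×ℤ, f g) * ((∑' g : ℤ×ℤ, f g) * (∑' g : ℤ×ℤ, f g))) := by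
        ring
    _ = _ := by rw [e2, e3, e4]

lemma summable_quad {f : ℤ×ℤ → ℂ} (hf : Summable fun g : ℤ×ℤ => ‖f g‖) :
    Summable fun G : (ℤ×ℤ) × (ℤ×ℤ) × (ℤ×ℤ) × (ℤ×ℤ) => f G.1 * (f G.2.1 * (f G.2.2.1 * f G.2.2.2)) := by
  have h2 : Summable fun x : (ℤ×ℤ)×(ℤ×ℤ) => ‖f x.1 * f x.2‖ := hf.mul_norm hf
  have h3 : Summable fun x : (ℤ×ℤ)×((ℤ×ℤ)×(ℤ×ℤ)) => ‖f x.1 * (f x.2.1 * f x.2.2)‖ :=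
    hf.mul_norm (g := fun x : (ℤ×ℤ)×(ℤ×ℤ) => f x.1 * f x.2) h2
  exact (hf.mul_norm (g := fun x : (ℤ×ℤ)×((ℤ×ℤ)×(ℤ×ℤ)) => f x.1 * (f x.2.1 * f x.2.2)) h3).of_norm

def sA (G : Idx) : ℤ := G.1.1 + G.2.1.1 + G.2.2.1.1 + G.2.2.2.1
def tA (G : Idx) : ℤ := G.1.2 + G.2.1.2 + G.2.2.1.2 + G.2.2.2.2

noncomputable def EA (Z : Matrix (Fin 2) (Fin 2) ℂ) (G : Idx) : ℂ :=
  Qc Z ((G.1.1:ℂ)+1/2) (G.1.2:ℂ) + Qc Z ((G.2.1.1:ℂ)+1/2) (G.2.1.2:ℂ) +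
  Qc Z ((G.2.2.1.1:ℂ)+1/2) (G.2.2.1.2:ℂ) + Qc Z ((G.2.2.2.1:ℂ)+1/2) (G.2.2.2.2:ℂ)

noncomputable def EC (Z : Matrix (Fin 2) (Fin 2) ℂ) (G : Idx) : ℂ :=
  Qc Z ((G.1.1:ℂ)+1/2) ((G.1.2:ℂ)+1/2) + Qc Z ((G.2.1.1:ℂ)+1/2) ((G.2.1.2:ℂ)+1/2) +
  Qc Z ((G.2.2.1.1:ℂ)+1/2) ((G.2.2.1.2:ℂ)+1/2) + Qc Z ((G.2.2.2.1:ℂ)+1/2) ((G.2.2.2.2:ℂ)+1/2)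

noncomputable def FA (Z : Matrix (Fin 2) (Fin 2) ℂ) (G : Idx) : ℂ :=
  Complex.exp ((Real.pi:ℂ) * I * EA Z G) * (1 - (-1:ℂ)^(tA G))

noncomputable def FC (Z : Matrix (Fin 2) (Fin 2) ℂ) (G : Idx) : ℂ :=
  Complex.exp ((Real.pi:ℂ) * I * EC Z G) * (1 - (-1:ℂ)^(sA G + tA G))

lemma neg_one_int (n : ℤ) : Complex.exp ((n:ℂ) * ((Real.pi:ℂ) * I)) = (-1:ℂ)^n := by
  rw [Complex.exp_int_mul, Complex.exp_pi_mul_I]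

lemma prod_f7 (G : Idx) :
    f7 Z G.1 * (f7 Z G.2.1 * (f7 Z G.2.2.1 * f7 Z G.2.2.2)) =
      Complex.exp ((Real.pi:ℂ) * I * EA Z G) := by
  simp only [f7, ← Complex.exp_add]
  congr 1
  rw [EA]; ring

lemma prod_f8 (G : Idx) :
    f8 Z G.1 * (f8 Z G.2.1 * (f8 Z G.2.2.1 * f8 Z G.2.2.2)) =
      Complex.exp ((Real.pi:ℂ) * I * EA Z G) * (-1:ℂ)^(tA G) := by
  simp only [f8, ← Complex.exp_add, ← neg_one_int]
  congr 1
  rw [EA, tA]; push_cast; ring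

lemma prod_f9 (G : Idx) :
    f9 Z G.1 * (f9 Z G.2.1 * (f9 Z G.2.2.1 * f9 Z G.2.2.2)) =
      Complex.exp ((Real.pi:ℂ) * I * EC Z G) := by
  simp only [f9, ← Complex.exp_add]
  congr 1
  rw [EC]; ring

lemma prod_f10 (G : Idx) :
    f10 Z G.1 * (f10 Z G.2.1 * (f10 Z G.2.2.1 * f10 Z G.2.2.2)) =
      Complex.exp ((Real.pi:ℂ) * I * EC Z G) * (-1:ℂ)^(sA G + tA G) := by
  have h4 : (-1:ℂ)^(sA G + tA G) = (-1:ℂ)^(sA G + tA G + 4) := by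
    rw [zpow_add₀ (by norm_num : (-1:ℂ) ≠ 0) (sA G + tA G) 4]; norm_num
  simp only [f10, ← Complex.exp_add, h4, ← neg_one_int]
  congr 1
  rw [EC, sA, tA]; push_cast; ring


def psiM (m : Idx) : Idx :=
  match m with
  | ((a1,b1),(a2,b2),(a3,b3),(a4,b4)) =>
    ((a1 - (a1+a2+a3+a4+2)/2, b1 - (b1+b2+b3+b4+1)/2),
     (a2 - (a1+a2+a3+a4+2)/2, b2 - (b1+b2+b3+b4+1)/2),
     (a3 - (a1+a2+a3+a4+2)/2, b3 - (b1+b2+b3+b4+1)/2),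
     (a4 - (a1+a2+a3+a4+2)/2, b4 - (b1+b2+b3+b4+1)/2))

def psiT (m : Idx) : Idx :=
  match m with
  | ((a1,b1),(a2,b2),(a3,b3),(a4,b4)) =>
    (((a1+a2+a3+a4+1)/2, (b1+b2+b3+b4+2)/2),
     ((a1+a2-a3-a4-1)/2, (b1+b2-b3-b4)/2),
     ((a1-a2+a3-a4-1)/2, (b1-b2+b3-b4)/2),
     ((a1-a2-a3+a4-1)/2, (b1-b2-b3+b4)/2))

def phiT (m : Idx) : Idx :=
  match m with
  | ((a1,b1),(a2,b2),(a3,b3),(a4,b4)) =>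
    (((a1+a2+a3+a4+1)/2, (b1+b2+b3+b4-1)/2),
     ((a1+a2-a3-a4-1)/2, (b1+b2-b3-b4-1)/2),
     ((a1-a2+a3-a4-1)/2, (b1-b2+b3-b4-1)/2),
     ((a1-a2-a3+a4-1)/2, (b1-b2-b3+b4-1)/2))

def psi (m : Idx) : Idx := if sA m % 2 = 0 then psiM m else psiT m
def phi (m : Idx) : Idx := if sA m % 2 = 0 then psiM m else phiT m

lemma phi_psi (m : Idx) (h : (sA m + tA m) % 2 = 1) : phi (psi m) = m := by
  obtain ⟨⟨a1,b1⟩,⟨a2,b2⟩,⟨a3,b3⟩,⟨a4,b4⟩⟩ := m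
  simp only [sA, tA] at h
  simp only [psi, phi, psiM, psiT, phiT, sA, tA]
  split_ifs <;> simp_all only [sA, tA, psiM, psiT, phiT, Prod.mk.injEq, if_true, if_false] <;> split_ifs <;> simp only [Prod.mk.injEq] <;> omega

lemma psi_phi (m : Idx) (h : tA m % 2 = 1) : psi (phi m) = m := by
  obtain ⟨⟨a1,b1⟩,⟨a2,b2⟩,⟨a3,b3⟩,⟨a4,b4⟩⟩ := m
  simp only [tA] at h
  simp only [psi, phi, psiM, psiT, phiT, sA, tA]
  split_ifs <;> simp_all only [sA, tA, psiM, psiT, phiT, Prod.mk.injEq, if_true, if_false] <;> split_ifs <;> simp only [Prod.mk.injEq] <;> omega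

lemma phi_parity (m : Idx) (h : tA m % 2 = 1) :
    (sA (phi m) + tA (phi m)) % 2 = 1 := by
  obtain ⟨⟨a1,b1⟩,⟨a2,b2⟩,⟨a3,b3⟩,⟨a4,b4⟩⟩ := m
  simp only [tA] at h
  simp only [phi, psiM, phiT, sA, tA]
  split_ifs <;> simp_all only [sA, tA, psiM, phiT, if_true, if_false] <;> omega

lemma zpow_neg_one_odd {n : ℤ} (h : n % 2 = 1) : (-1:ℂ)^n = -1 :=
  Odd.neg_one_zpow ⟨(n-1)/2, by omega⟩

lemma zpow_neg_one_even {n : ℤ} (h : n % 2 = 0) : (-1:ℂ)^n = 1 :=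
  Even.neg_one_zpow ⟨n/2, by omega⟩

lemma FA_ne_zero_iff (G : Idx) : FA Z G ≠ 0 ↔ tA G % 2 = 1 := by
  constructor
  · intro h
    by_contra h'
    apply h
    rw [FA, zpow_neg_one_even (by omega)]
    ring
  · intro h
    rw [FA, zpow_neg_one_odd h]
    exact mul_ne_zero (Complex.exp_ne_zero _) (by norm_num)

lemma FC_ne_zero_iff (G : Idx) : FC Z G ≠ 0 ↔ (sA G + tA G) % 2 = 1 := by
  constructor
  · intro h
    by_contra h'
    apply h
    rw [FC, zpow_neg_one_even (by omega)]
    ring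
  · intro h
    rw [FC, zpow_neg_one_odd h]
    exact mul_ne_zero (Complex.exp_ne_zero _) (by norm_num)

lemma FA_psi (m : Idx) (h : (sA m + tA m) % 2 = 1) : FA Z (psi m) = FC Z m := by
  obtain ⟨⟨a1,b1⟩,⟨a2,b2⟩,⟨a3,b3⟩,⟨a4,b4⟩⟩ := m
  simp only [sA, tA] at h
  by_cases hs : (a1+a2+a3+a4) % 2 = 0
  · have hcond : sA ((a1,b1),(a2,b2),(a3,b3),(a4,b4)) % 2 = 0 := by
      simp only [sA]; omega
    rw [psi, if_pos hcond]
    obtain ⟨k, hk⟩ : ∃ k, a1+a2+a3+a4+2 = 2*k := ⟨(a1+a2+a3+a4+2)/2, by omega⟩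
    obtain ⟨l, hl⟩ : ∃ l, b1+b2+b3+b4+1 = 2*l := ⟨(b1+b2+b3+b4+1)/2, by omega⟩
    have hd1 : (a1+a2+a3+a4+2)/2 = k := by omega
    have hd2 : (b1+b2+b3+b4+1)/2 = l := by omega
    rw [FA, FC]
    simp only [psiM, sA, tA, EA, EC, hd1, hd2]
    rw [zpow_neg_one_odd (by omega), zpow_neg_one_odd (by omega)]
    congr 2
    have hkC : (k:ℂ) = ((a1:ℂ)+a2+a3+a4+2)/2 := by
      have := congrArg (fun n : ℤ => (n:ℂ)) hk
      push_cast at this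
      linear_combination (- this) / 2
    have hlC : (l:ℂ) = ((b1:ℂ)+b2+b3+b4+1)/2 := by
      have := congrArg (fun n : ℤ => (n:ℂ)) hl
      push_cast at this
      linear_combination (- this) / 2
    push_cast
    rw [hkC, hlC]
    simp only [Qc]
    ring
  · have hcond : ¬ (sA ((a1,b1),(a2,b2),(a3,b3),(a4,b4)) % 2 = 0) := by
      simp only [sA]; omega
    rw [psi, if_neg hcond]
    obtain ⟨k1, hk1⟩ : ∃ k, a1+a2+a3+a4+1 = 2*k := ⟨(a1+a2+a3+a4+1)/2, by omega⟩
    obtain ⟨k2, hk2⟩ : ∃ k, a1+a2-a3-a4-1 = 2*k := ⟨(a1+a2-a3-a4-1)/2, by omega⟩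
    obtain ⟨k3, hk3⟩ : ∃ k, a1-a2+a3-a4-1 = 2*k := ⟨(a1-a2+a3-a4-1)/2, by omega⟩
    obtain ⟨k4, hk4⟩ : ∃ k, a1-a2-a3+a4-1 = 2*k := ⟨(a1-a2-a3+a4-1)/2, by omega⟩
    obtain ⟨l1, hl1⟩ : ∃ l, b1+b2+b3+b4+2 = 2*l := ⟨(b1+b2+b3+b4+2)/2, by omega⟩
    obtain ⟨l2, hl2⟩ : ∃ l, b1+b2-b3-b4 = 2*l := ⟨(b1+b2-b3-b4)/2, by omega⟩
    obtain ⟨l3, hl3⟩ : ∃ l, b1-b2+b3-b4 = 2*l := ⟨(b1-b2+b3-b4)/2, by omega⟩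
    obtain ⟨l4, hl4⟩ : ∃ l, b1-b2-b3+b4 = 2*l := ⟨(b1-b2-b3+b4)/2, by omega⟩
    have hd1 : (a1+a2+a3+a4+1)/2 = k1 := by omega
    have hd2 : (a1+a2-a3-a4-1)/2 = k2 := by omega
    have hd3 : (a1-a2+a3-a4-1)/2 = k3 := by omega
    have hd4 : (a1-a2-a3+a4-1)/2 = k4 := by omega
    have he1 : (b1+b2+b3+b4+2)/2 = l1 := by omega
    have he2 : (b1+b2-b3-b4)/2 = l2 := by omega
    have he3 : (b1-b2+b3-b4)/2 = l3 := by omega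
    have he4 : (b1-b2-b3+b4)/2 = l4 := by omega
    rw [FA, FC]
    simp only [psiT, sA, tA, EA, EC, hd1, hd2, hd3, hd4, he1, he2, he3, he4]
    rw [zpow_neg_one_odd (by omega), zpow_neg_one_odd (by omega)]
    congr 2
    have hkC1 : (k1:ℂ) = ((a1:ℂ)+a2+a3+a4+1)/2 := by
      have := congrArg (fun n : ℤ => (n:ℂ)) hk1; push_cast at this; linear_combination (- this) / 2
    have hkC2 : (k2:ℂ) = ((a1:ℂ)+a2-a3-a4-1)/2 := by
      have := congrArg (fun n : ℤ => (n:ℂ)) hk2; push_cast at this; linear_combination (- this) / 2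
    have hkC3 : (k3:ℂ) = ((a1:ℂ)-a2+a3-a4-1)/2 := by
      have := congrArg (fun n : ℤ => (n:ℂ)) hk3; push_cast at this; linear_combination (- this) / 2
    have hkC4 : (k4:ℂ) = ((a1:ℂ)-a2-a3+a4-1)/2 := by
      have := congrArg (fun n : ℤ => (n:ℂ)) hk4; push_cast at this; linear_combination (- this) / 2
    have hlC1 : (l1:ℂ) = ((b1:ℂ)+b2+b3+b4+2)/2 := by
      have := congrArg (fun n : ℤ => (n:ℂ)) hl1; push_cast at this; linear_combination (- this) / 2
    have hlC2 : (l2:ℂ) = ((b1:ℂ)+b2-b3-b4)/2 := by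
      have := congrArg (fun n : ℤ => (n:ℂ)) hl2; push_cast at this; linear_combination (- this) / 2
    have hlC3 : (l3:ℂ) = ((b1:ℂ)-b2+b3-b4)/2 := by
      have := congrArg (fun n : ℤ => (n:ℂ)) hl3; push_cast at this; linear_combination (- this) / 2
    have hlC4 : (l4:ℂ) = ((b1:ℂ)-b2-b3+b4)/2 := by
      have := congrArg (fun n : ℤ => (n:ℂ)) hl4; push_cast at this; linear_combination (- this) / 2
    push_cast
    rw [hkC1, hkC2, hkC3, hkC4, hlC1, hlC2, hlC3, hlC4]
    simp only [Qc]
    ring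

lemma key : ∑' G : Idx, FA Z G = ∑' G : Idx, FC Z G := by
  apply tsum_eq_tsum_of_ne_zero_bij (fun x => psi x.1)
  · intro x y hxy
    have hx := (FC_ne_zero_iff Z x.1).mp x.2
    have hy := (FC_ne_zero_iff Z y.1).mp y.2
    have h2 : phi (psi (x.1 : Idx)) = phi (psi (y.1 : Idx)) := congrArg phi hxy
    rw [phi_psi _ hx, phi_psi _ hy] at h2
    exact Subtype.ext h2
  · intro G hG
    have ht := (FA_ne_zero_iff Z G).mp hG
    refine ⟨⟨phi G, ?_⟩, ?_⟩
    · rw [Function.mem_support, FC_ne_zero_iff]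
      exact phi_parity G ht
    · exact psi_phi G ht
  · intro x
    exact FA_psi Z x.1 ((FC_ne_zero_iff Z x.1).mp x.2)


lemma diffA (hpos : (Z.map Complex.im).PosDef) :
    thetaNull ![1,0] ![0,0] Z ^ 4 - thetaNull ![1,0] ![0,1] Z ^ 4 = ∑' G : Idx, FA Z G := by
  have S7 : Summable (fun G : Idx => Complex.exp ((Real.pi:ℂ) * I * EA Z G)) :=
    (summable_quad (summable_norm_f7 Z hpos)).congr (prod_f7 Z)
  have S8 : Summable (fun G : Idx =>
      Complex.exp ((Real.pi:ℂ) * I * EA Z G) * (-1:ℂ)^(tA G)) :=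
    (summable_quad (summable_norm_f8 Z hpos)).congr (prod_f8 Z)
  rw [theta7_eq, theta8_eq, pow_four (summable_norm_f7 Z hpos),
      pow_four (summable_norm_f8 Z hpos), tsum_congr (prod_f7 Z), tsum_congr (prod_f8 Z),
      ← Summable.tsum_sub S7 S8]
  exact tsum_congr fun G => by rw [FA]; ring

lemma diffC (hpos : (Z.map Complex.im).PosDef) :
    thetaNull ![1,1] ![0,0] Z ^ 4 - thetaNull ![1,1] ![1,1] Z ^ 4 = ∑' G : Idx, FC Z G := by
  have S9 : Summable (fun G : Idx => Complex.exp ((Real.pi:ℂ) * I * EC Z G)) :=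
    (summable_quad (summable_norm_f9 Z hpos)).congr (prod_f9 Z)
  have S10 : Summable (fun G : Idx =>
      Complex.exp ((Real.pi:ℂ) * I * EC Z G) * (-1:ℂ)^(sA G + tA G)) :=
    (summable_quad (summable_norm_f10 Z hpos)).congr (prod_f10 Z)
  rw [theta9_eq, theta10_eq, pow_four (summable_norm_f9 Z hpos),
      pow_four (summable_norm_f10 Z hpos), tsum_congr (prod_f9 Z), tsum_congr (prod_f10 Z),
      ← Summable.tsum_sub S9 S10]
  exact tsum_congr fun G => by rw [FC]; ring

end RR

/-- The Riemann relation `θ₇⁴ − θ₈⁴ − θ₉⁴ + θ₁₀⁴ = 0` on `H₂`, where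
`θ₇,…,θ₁₀` have characteristics `(1,0,0,0), (1,0,0,1), (1,1,0,0), (1,1,1,1)`. -/
theorem riemann_relation_quartic :
    ∀ Z ∈ SiegelH2,
      thetaNull ![1, 0] ![0, 0] Z ^ 4 - thetaNull ![1, 0] ![0, 1] Z ^ 4 -
          thetaNull ![1, 1] ![0, 0] Z ^ 4 + thetaNull ![1, 1] ![1, 1] Z ^ 4 = 0 := by
  intro Z hZ
  obtain ⟨-, hpos⟩ := hZ
  have h1 := RR.diffA Z hpos
  have h2 := RR.diffC Z hpos
  have h3 := RR.key Z
  linear_combination h1 - h2 + h3
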